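/- Let 𝓑(m,w) = Σ_{i,j} b̂(m_{i,j}, w_{i,j}) and 𝓕(m) = Σ_{i,j} F(x_{i,j}, m_{i,j}) with F continuous in m on [0,∞) and equal to +∞ for m < 0. Then the minimization of 𝓑 + 𝓕 over the affine constraint set {(m,w) : G(m,w) = (0,1)} intersected with {m ≤ d} admits at least one minimizer, and the optimal value is finite. -/

import Mathlib

open scoped BigOperators
open Classical

noncomputable section

/-- Euclidean norm on ℝ⁴. -/
def nrm4 (w : Fin 4 → ℝ) : ℝ := Real.sqrt (∑ i, (w i) ^ 2)

/-- The cone `K = ℝ₊ × ℝ₋ × ℝ₊ × ℝ₋`. -/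
def Kset : Set (Fin 4 → ℝ) := {w | 0 ≤ w 0 ∧ w 1 ≤ 0 ∧ 0 ≤ w 2 ∧ w 3 ≤ 0}

/-- The cost function `b`. -/
def bfun (q : ℝ) (m : ℝ) (w : Fin 4 → ℝ) : EReal :=
  if 0 < m then (((nrm4 w ^ q) / (q * m ^ (q - 1)) : ℝ) : EReal)
  else if m = 0 ∧ w = 0 then (0 : EReal) else ⊤

/-- `b̂ = b + ι_{ℝ × K}`. -/
def bhat (q : ℝ) (m : ℝ) (w : Fin 4 → ℝ) : EReal :=
  bfun q m w + (if w ∈ Kset then (0 : EReal) else ⊤)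

/-! ### Auxiliary lemmas -/

lemma nrm4_nonneg (w : Fin 4 → ℝ) : 0 ≤ nrm4 w := Real.sqrt_nonneg _

lemma nrm4_pos {w : Fin 4 → ℝ} (hw : w ≠ 0) : 0 < nrm4 w := by
  rcases (nrm4_nonneg w).lt_or_eq with h | h
  · exact h
  · exfalso; apply hw
    have h2 : ∑ i, (w i) ^ 2 = 0 := by
      have h3 := Real.sqrt_eq_zero'.mp h.symm
      have h4 : 0 ≤ ∑ i, (w i)^2 := Finset.sum_nonneg fun i _ => sq_nonneg (w i)
      linarith
    funext i
    have := (Finset.sum_eq_zero_iff_of_nonneg (fun i _ => sq_nonneg (w i))).mp h2 i (Finset.mem_univ i)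
    exact pow_eq_zero_iff (n := 2) (by norm_num) |>.mp this

lemma nrm4_zero : nrm4 0 = 0 := by simp [nrm4]

lemma continuous_nrm4 : Continuous nrm4 := by
  apply Real.continuous_sqrt.comp
  exact continuous_finset_sum _ fun i _ => (continuous_apply i).pow 2

lemma abs_le_nrm4 (w : Fin 4 → ℝ) (k : Fin 4) : |w k| ≤ nrm4 w := by
  rw [← Real.sqrt_sq_eq_abs]
  exact Real.sqrt_le_sqrt (Finset.single_le_sum (fun i _ => sq_nonneg (w i)) (Finset.mem_univ k))

/-! ### EReal sum lemmas -/

lemma ereal_sum_ne_bot {ι : Type*} (s : Finset ι) (f : ι → EReal) (h : ∀ i ∈ s, f i ≠ ⊥) :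
    ∑ i ∈ s, f i ≠ ⊥ := by
  induction s using Finset.induction_on with
  | empty => simp
  | insert _ _ hx ih =>
    rename_i a t
    rw [Finset.sum_insert hx]
    rw [Ne, EReal.add_eq_bot_iff]
    push_neg
    exact ⟨h a (Finset.mem_insert_self a t), ih fun i hi => h i (Finset.mem_insert_of_mem hi)⟩

lemma ereal_sum_ne_top {ι : Type*} (s : Finset ι) (f : ι → EReal) (h : ∀ i ∈ s, f i ≠ ⊤) :
    ∑ i ∈ s, f i ≠ ⊤ := by
  induction s using Finset.induction_on with
  | empty => simp
  | insert _ _ hx ih =>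
    rename_i a t
    rw [Finset.sum_insert hx]
    exact (EReal.add_lt_top (h a (Finset.mem_insert_self a t))
      (ih fun i hi => h i (Finset.mem_insert_of_mem hi))).ne

lemma ereal_sum_eq_top {ι : Type*} (s : Finset ι) (f : ι → EReal) {i : ι} (hi : i ∈ s)
    (htop : f i = ⊤) (hbot : ∀ j ∈ s, f j ≠ ⊥) : ∑ j ∈ s, f j = ⊤ := by
  rw [← Finset.add_sum_erase s f hi, htop]
  exact EReal.top_add_of_ne_bot (ereal_sum_ne_bot _ _ fun j hj => hbot j (Finset.mem_of_mem_erase hj))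

lemma ereal_coe_sum {ι : Type*} (s : Finset ι) (f : ι → ℝ) :
    ((∑ i ∈ s, f i : ℝ) : EReal) = ∑ i ∈ s, (f i : EReal) := by
  induction s using Finset.induction_on with
  | empty => simp
  | insert _ _ hx ih => rename_i a t; rw [Finset.sum_insert hx, Finset.sum_insert hx, EReal.coe_add, ih]

/-! ### Minimum of a lower semicontinuous function on a compact set -/

lemma exists_min_of_lsc {α : Type*} [TopologicalSpace α] [T2Space α] {f : α → EReal}
    (hf : LowerSemicontinuous f) {s : Set α} (hs : IsCompact s) (hne : s.Nonempty) :
    ∃ x ∈ s, ∀ y ∈ s, f x ≤ f y := by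
  set v : EReal := sInf (f '' s) with hv
  suffices h : ∃ x ∈ s, f x ≤ v by
    obtain ⟨x, hx, hxv⟩ := h
    exact ⟨x, hx, fun y hy => hxv.trans (sInf_le ⟨y, hy, rfl⟩)⟩
  by_contra hcon
  push_neg at hcon
  have hvlt : v < ⊤ := by
    obtain ⟨x0, hx0⟩ := hne
    exact lt_of_lt_of_le (hcon x0 hx0) le_top
  have hs_closed : IsClosed s := hs.isClosed
  set T : {r : EReal // v < r} → Set α := fun r => {x ∈ s | f x ≤ r.1} with hT
  have hTclosed : ∀ r, IsClosed (T r) := fun r =>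
    hs_closed.inter (hf.isClosed_preimage r.1)
  have hTsub : ∀ r, T r ⊆ s := fun r => Set.sep_subset _ _
  have hTne : ∀ r, (T r).Nonempty := by
    rintro ⟨r, hr⟩
    have : sInf (f '' s) < r := hr
    obtain ⟨y, ⟨x, hx, rfl⟩, hyr⟩ := sInf_lt_iff.mp this
    exact ⟨x, hx, hyr.le⟩
  have hTdir : Directed (· ⊇ ·) T := by
    rintro ⟨r1, hr1⟩ ⟨r2, hr2⟩
    refine ⟨⟨min r1 r2, lt_min hr1 hr2⟩, ?_, ?_⟩
    · rintro x ⟨hx, hxf⟩; exact ⟨hx, hxf.trans (min_le_left _ _)⟩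
    · rintro x ⟨hx, hxf⟩; exact ⟨hx, hxf.trans (min_le_right _ _)⟩
  have hnonempty : Nonempty {r : EReal // v < r} := ⟨⟨⊤, hvlt⟩⟩
  obtain ⟨x, hx⟩ := IsCompact.nonempty_iInter_of_directed_nonempty_isCompact_isClosed
    T hTdir hTne (fun r => hs.of_isClosed_subset (hTclosed r) (hTsub r)) hTclosed
  simp only [Set.mem_iInter] at hx
  have hxs : x ∈ s := (hx ⟨⊤, hvlt⟩).1
  have hxv : f x ≤ v := le_of_forall_gt_imp_ge_of_dense fun r hr => (hx ⟨r, hr⟩).2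
  exact absurd hxv (not_le.mpr (hcon x hxs))

/-! ### Properties of `bfun` and `bhat` -/

lemma bfun_nonneg {q : ℝ} (hq : 1 < q) (m : ℝ) (w : Fin 4 → ℝ) : 0 ≤ bfun q m w := by
  unfold bfun
  split_ifs with h1 h2
  · rw [EReal.coe_nonneg]
    apply div_nonneg (Real.rpow_nonneg (nrm4_nonneg w) q)
    exact mul_nonneg (by linarith) (Real.rpow_nonneg h1.le _)
  · exact le_refl _
  · exact le_top

lemma bfun_ne_bot {q : ℝ} (hq : 1 < q) (m : ℝ) (w : Fin 4 → ℝ) : bfun q m w ≠ ⊥ :=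
  ((lt_of_lt_of_le (by simp) (bfun_nonneg hq m w)) : (⊥:EReal) < _).ne'

lemma indK_nonneg (w : Fin 4 → ℝ) : 0 ≤ (if w ∈ Kset then (0:EReal) else ⊤) := by
  split_ifs <;> simp

lemma bhat_nonneg {q : ℝ} (hq : 1 < q) (m : ℝ) (w : Fin 4 → ℝ) : 0 ≤ bhat q m w :=
  add_nonneg (bfun_nonneg hq m w) (indK_nonneg w)

lemma bhat_ne_bot {q : ℝ} (hq : 1 < q) (m : ℝ) (w : Fin 4 → ℝ) : bhat q m w ≠ ⊥ :=
  ((lt_of_lt_of_le (by simp) (bhat_nonneg hq m w)) : (⊥:EReal) < _).ne'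

lemma bfun_eq_top_of_neg {q m : ℝ} {w : Fin 4 → ℝ} (hm : m < 0) : bfun q m w = ⊤ := by
  unfold bfun
  rw [if_neg (lt_asymm hm), if_neg (by rintro ⟨h, -⟩; exact hm.ne h)]

lemma bhat_eq_bfun {q m : ℝ} {w : Fin 4 → ℝ} (hw : w ∈ Kset) : bhat q m w = bfun q m w := by
  unfold bhat; rw [if_pos hw, add_zero]

lemma Kset_closed : IsClosed Kset := by
  have h0 : IsClosed {w : Fin 4 → ℝ | 0 ≤ w 0} := isClosed_le continuous_const (continuous_apply 0)
  have h1 : IsClosed {w : Fin 4 → ℝ | w 1 ≤ 0} := isClosed_le (continuous_apply 1) continuous_const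
  have h2 : IsClosed {w : Fin 4 → ℝ | 0 ≤ w 2} := isClosed_le continuous_const (continuous_apply 2)
  have h3 : IsClosed {w : Fin 4 → ℝ | w 3 ≤ 0} := isClosed_le (continuous_apply 3) continuous_const
  have : Kset = {w : Fin 4 → ℝ | 0 ≤ w 0} ∩ ({w | w 1 ≤ 0} ∩ ({w | 0 ≤ w 2} ∩ {w | w 3 ≤ 0})) := by
    ext w; simp [Kset, Set.mem_setOf_eq, and_assoc]
  rw [this]
  exact h0.inter (h1.inter (h2.inter h3))

lemma lsc_ind : LowerSemicontinuous (fun p : ℝ × (Fin 4 → ℝ) =>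
    if p.2 ∈ Kset then (0:EReal) else ⊤) := by
  intro x y hy
  change y < (if x.2 ∈ Kset then (0:EReal) else ⊤) at hy
  by_cases hx : x.2 ∈ Kset
  · rw [if_pos hx] at hy
    refine Filter.Eventually.of_forall fun p => lt_of_lt_of_le hy (indK_nonneg p.2)
  · rw [if_neg hx] at hy
    have hU : IsOpen {p : ℝ × (Fin 4 → ℝ) | p.2 ∉ Kset} :=
      (Kset_closed.preimage continuous_snd).isOpen_compl
    filter_upwards [hU.mem_nhds hx] with p hp
    rw [if_neg hp]; exact hy

lemma bfun_lsc {q : ℝ} (hq : 1 < q) :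
    LowerSemicontinuous (fun p : ℝ × (Fin 4 → ℝ) => bfun q p.1 p.2) := by
  have hq0 : (0:ℝ) < q := by linarith
  have hq1 : (0:ℝ) < q - 1 := by linarith
  intro x
  rcases lt_trichotomy x.1 0 with hneg | hzero | hpos
  · intro y hy
    have hU : IsOpen {p : ℝ × (Fin 4 → ℝ) | p.1 < 0} := isOpen_lt continuous_fst continuous_const
    filter_upwards [hU.mem_nhds hneg] with p hp
    rw [bfun_eq_top_of_neg hp]
    exact lt_of_lt_of_le hy le_top
  · by_cases hw : x.2 = 0
    · intro y hy
      have hfx : bfun q x.1 x.2 = 0 := by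
        unfold bfun
        rw [if_neg (by rw [hzero]; exact lt_irrefl 0), if_pos ⟨hzero, hw⟩]
      change y < bfun q x.1 x.2 at hy
      rw [hfx] at hy
      exact Filter.Eventually.of_forall fun p => lt_of_lt_of_le hy (bfun_nonneg hq _ _)
    · intro y hy
      obtain ⟨R0, hyR0, -⟩ := EReal.lt_iff_exists_real_btwn.mp (lt_of_lt_of_le hy le_top)
      set R : ℝ := max R0 1 with hRdef
      have hRpos : (0:ℝ) < R := lt_of_lt_of_le one_pos (le_max_right _ _)
      have hyR : y < (R : EReal) := lt_of_lt_of_le hyR0 (by exact_mod_cast le_max_left R0 1)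
      set ε : ℝ := nrm4 x.2 / 2 with hεdef
      have hε : 0 < ε := by have := nrm4_pos hw; positivity
      set t : ℝ := ε ^ q / (q * R) with htdef
      have ht : 0 < t := div_pos (Real.rpow_pos_of_pos hε q) (by positivity)
      set δ : ℝ := t ^ (q - 1)⁻¹ with hδdef
      have hδ : 0 < δ := Real.rpow_pos_of_pos ht _
      have hδt : δ ^ (q - 1) = t := Real.rpow_inv_rpow ht.le (by linarith)
      have hU : IsOpen {p : ℝ × (Fin 4 → ℝ) | p.1 < δ ∧ ε < nrm4 p.2} :=
        (isOpen_lt continuous_fst continuous_const).inter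
          (isOpen_lt continuous_const (continuous_nrm4.comp continuous_snd))
      have hxU : x ∈ {p : ℝ × (Fin 4 → ℝ) | p.1 < δ ∧ ε < nrm4 p.2} := by
        constructor
        · rw [hzero]; exact hδ
        · rw [hεdef]; have := nrm4_pos hw; linarith
      filter_upwards [hU.mem_nhds hxU] with p hp
      obtain ⟨hp1, hp2⟩ := hp
      refine lt_of_lt_of_le hyR ?_
      unfold bfun
      split_ifs with h1 h2
      · rw [EReal.coe_le_coe_iff]
        have hdenpos : (0:ℝ) < q * p.1 ^ (q - 1) := by
          have := Real.rpow_pos_of_pos h1 (q - 1); positivity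
        rw [le_div_iff₀ hdenpos]
        have hle1 : p.1 ^ (q - 1) ≤ t := by
          rw [← hδt]; exact (Real.rpow_lt_rpow h1.le hp1 hq1).le
        calc R * (q * p.1 ^ (q - 1)) ≤ R * (q * t) := by
              apply mul_le_mul_of_nonneg_left _ hRpos.le
              exact mul_le_mul_of_nonneg_left hle1 hq0.le
          _ = ε ^ q := by
              rw [htdef]; field_simp
          _ ≤ nrm4 p.2 ^ q := Real.rpow_le_rpow hε.le hp2.le hq0.le
      · exfalso
        rw [h2.2, nrm4_zero] at hp2
        linarith
      · exact le_top
  · intro y hy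
    set g : ℝ × (Fin 4 → ℝ) → ℝ := fun p => nrm4 p.2 ^ q / (q * p.1 ^ (q - 1)) with hgdef
    have hg : ContinuousAt g x := by
      apply ContinuousAt.div
      · exact ((continuous_nrm4.comp continuous_snd).continuousAt).rpow_const (Or.inr hq0.le)
      · exact continuousAt_const.mul
          ((continuous_fst.continuousAt).rpow_const (Or.inl hpos.ne'))
      · have := Real.rpow_pos_of_pos hpos (q - 1); positivity
    have hfx : bfun q x.1 x.2 = ((g x : ℝ) : EReal) := by unfold bfun; rw [if_pos hpos]
    change y < bfun q x.1 x.2 at hy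
    rw [hfx] at hy
    have hcont : ContinuousAt (fun p => ((g p : ℝ) : EReal)) x :=
      continuous_coe_real_ereal.continuousAt.comp hg
    have h1 : ∀ᶠ p in nhds x, y < ((g p : ℝ) : EReal) :=
      hcont.eventually_mem (isOpen_Ioi.mem_nhds hy)
    have hU : IsOpen {p : ℝ × (Fin 4 → ℝ) | 0 < p.1} := isOpen_lt continuous_const continuous_fst
    filter_upwards [h1, hU.mem_nhds hpos] with p hp1 hp2
    have : bfun q p.1 p.2 = ((g p : ℝ) : EReal) := by unfold bfun; rw [if_pos hp2]
    rw [this]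
    exact hp1

lemma bhat_lsc {q : ℝ} (hq : 1 < q) :
    LowerSemicontinuous (fun p : ℝ × (Fin 4 → ℝ) => bhat q p.1 p.2) := by
  apply (bfun_lsc hq).add' lsc_ind
  intro x
  apply EReal.continuousAt_add
  · exact Or.inr (((lt_of_lt_of_le (by simp) (indK_nonneg x.2)) : (⊥:EReal) < _).ne')
  · exact Or.inl (bfun_ne_bot hq _ _)

/-- Coercivity bound for `bfun`. -/
lemma bfun_bound {q : ℝ} (hq : 1 < q) {m D c : ℝ} {w : Fin 4 → ℝ}
    (hm0 : 0 ≤ m) (hmD : m ≤ D) (hb : bfun q m w ≤ (c : EReal)) :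
    nrm4 w ≤ (max c 0 * (q * max D 1 ^ (q - 1))) ^ q⁻¹ := by
  have hq0 : (0:ℝ) < q := by linarith
  have hD1 : (0:ℝ) < max D 1 := lt_of_lt_of_le one_pos (le_max_right _ _)
  have hbase : 0 ≤ max c 0 * (q * max D 1 ^ (q - 1)) := by
    have := Real.rpow_pos_of_pos hD1 (q - 1)
    have h0c : (0:ℝ) ≤ max c 0 := le_max_right _ _
    positivity
  rcases hm0.lt_or_eq with hpos | hzero
  · have hfx : bfun q m w = (((nrm4 w ^ q) / (q * m ^ (q - 1)) : ℝ) : EReal) := by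
      unfold bfun; rw [if_pos hpos]
    rw [hfx, EReal.coe_le_coe_iff] at hb
    have hden : (0:ℝ) < q * m ^ (q - 1) := by
      have := Real.rpow_pos_of_pos hpos (q - 1); positivity
    have h1 : nrm4 w ^ q ≤ c * (q * m ^ (q - 1)) := (div_le_iff₀ hden).mp hb
    have hmle : m ^ (q - 1) ≤ max D 1 ^ (q - 1) :=
      Real.rpow_le_rpow hm0 (hmD.trans (le_max_left D 1)) (by linarith)
    have h2 : c * (q * m ^ (q - 1)) ≤ max c 0 * (q * max D 1 ^ (q - 1)) := by
      refine le_trans (mul_le_mul_of_nonneg_right (le_max_left c 0) hden.le) ?_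
      exact mul_le_mul_of_nonneg_left (mul_le_mul_of_nonneg_left hmle hq0.le) (le_max_right c 0)
    have h3 : nrm4 w ^ q ≤ max c 0 * (q * max D 1 ^ (q - 1)) := h1.trans h2
    calc nrm4 w = (nrm4 w ^ q) ^ q⁻¹ := (Real.rpow_rpow_inv (nrm4_nonneg w) hq0.ne').symm
      _ ≤ _ := Real.rpow_le_rpow (Real.rpow_nonneg (nrm4_nonneg w) q) h3 (by positivity)
  · by_cases hw : w = 0
    · rw [hw, nrm4_zero]
      exact Real.rpow_nonneg hbase _
    · exfalso
      have : bfun q m w = ⊤ := by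
        unfold bfun
        rw [if_neg (by rw [← hzero]; exact lt_irrefl 0), if_neg (by rintro ⟨-, h⟩; exact hw h)]
      rw [this] at hb
      exact absurd hb (by simp)

/-! ### Lower semicontinuity of `F` and of sums -/

lemma F_lsc (f : ℝ → EReal) (hc : ContinuousOn f (Set.Ici 0))
    (ht : ∀ m : ℝ, m < 0 → f m = ⊤) : LowerSemicontinuous f := by
  intro x y hy
  rcases lt_or_ge x 0 with hx | hx
  · filter_upwards [isOpen_Iio.mem_nhds hx] with z hz
    rw [ht z hz]; exact lt_of_lt_of_le hy le_top
  · have h1 : ∀ᶠ z in nhdsWithin x (Set.Ici 0), y < f z :=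
      (hc x hx) (isOpen_Ioi.mem_nhds hy)
    have h2 : ∀ᶠ z in nhdsWithin x (Set.Iio 0), y < f z := by
      filter_upwards [self_mem_nhdsWithin] with z hz
      rw [ht z hz]; exact lt_of_lt_of_le hy le_top
    have hunion : nhds x = nhdsWithin x (Set.Ici 0) ⊔ nhdsWithin x (Set.Iio 0) := by
      rw [← nhdsWithin_union]
      have : Set.Ici (0:ℝ) ∪ Set.Iio 0 = Set.univ := by
        ext z; simp [le_or_gt]
      rw [this, nhdsWithin_univ]
    rw [Filter.Eventually, hunion]
    exact Filter.mem_sup.mpr ⟨h1, h2⟩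

lemma lsc_sum_ereal {α : Type*} [TopologicalSpace α] {ι : Type*} (s : Finset ι)
    (f : ι → α → EReal) (h : ∀ i ∈ s, LowerSemicontinuous (f i))
    (hb : ∀ i ∈ s, ∀ x, f i x ≠ ⊥) :
    LowerSemicontinuous (fun x => ∑ i ∈ s, f i x) := by
  induction s using Finset.induction_on with
  | empty => simpa using lowerSemicontinuous_const
  | insert _ _ hx ih =>
    rename_i a t
    have hsum := ih (fun i hi => h i (Finset.mem_insert_of_mem hi))
      (fun i hi => hb i (Finset.mem_insert_of_mem hi))
    have hadd := (h a (Finset.mem_insert_self a t)).add' hsum ?_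
    · have : (fun x => ∑ i ∈ insert a t, f i x) = fun x => f a x + ∑ i ∈ t, f i x := by
        funext x; rw [Finset.sum_insert hx]
      rw [this]; exact hadd
    · intro x
      apply EReal.continuousAt_add
      · exact Or.inr (ereal_sum_ne_bot t (fun i => f i x)
          (fun i hi => hb i (Finset.mem_insert_of_mem hi) x))
      · exact Or.inl (hb a (Finset.mem_insert_self a t) x)

theorem stmt7 (N : ℕ) (hN : 0 < N) (q : ℝ) (hq : 1 < q)
    (A : ((Fin N × Fin N) → ℝ) →ₗ[ℝ] ((Fin N × Fin N) → ℝ))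
    (B : ((Fin N × Fin N) → (Fin 4 → ℝ)) →ₗ[ℝ] ((Fin N × Fin N) → ℝ))
    (hA1 : A (fun _ => 1) = 0)
    (hAsum : ∀ m, ∑ ij, A m ij = 0)
    (hB : (LinearMap.range B : Set ((Fin N × Fin N) → ℝ)) = {y | ∑ ij, y ij = 0})
    (hBconst : ∀ c : Fin 4 → ℝ, B (fun _ => c) = 0)
    (d : (Fin N × Fin N) → ℝ) (hd : ∀ ij, 0 < d ij)
    (hdsum : 1 < (1 / (N : ℝ)) ^ 2 * ∑ ij, d ij)
    (F : (Fin N × Fin N) → ℝ → EReal)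
    (hFcont : ∀ ij, ContinuousOn (F ij) (Set.Ici 0))
    (hFtop : ∀ ij (m : ℝ), m < 0 → F ij m = ⊤)
    (hFfin : ∀ ij (m : ℝ), 0 ≤ m → ∃ r : ℝ, F ij m = (r : EReal)) :
    ∃ p : ((Fin N × Fin N) → ℝ) × ((Fin N × Fin N) → (Fin 4 → ℝ)),
      (A p.1 + B p.2 = 0 ∧ (1 / (N : ℝ)) ^ 2 * ∑ ij, p.1 ij = 1 ∧ ∀ ij, p.1 ij ≤ d ij) ∧
      (∀ p' : ((Fin N × Fin N) → ℝ) × ((Fin N × Fin N) → (Fin 4 → ℝ)),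
        (A p'.1 + B p'.2 = 0 ∧ (1 / (N : ℝ)) ^ 2 * ∑ ij, p'.1 ij = 1 ∧ ∀ ij, p'.1 ij ≤ d ij) →
        (∑ ij, (bhat q (p.1 ij) (p.2 ij) + F ij (p.1 ij)))
          ≤ ∑ ij, (bhat q (p'.1 ij) (p'.2 ij) + F ij (p'.1 ij))) ∧
      (∑ ij, (bhat q (p.1 ij) (p.2 ij) + F ij (p.1 ij))) ≠ ⊤ ∧
      (∑ ij, (bhat q (p.1 ij) (p.2 ij) + F ij (p.1 ij))) ≠ ⊥ := by
  classical
  have hq0 : (0:ℝ) < q := by linarith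
  set Φ : (((Fin N × Fin N) → ℝ) × ((Fin N × Fin N) → (Fin 4 → ℝ))) → EReal :=
    fun p => ∑ ij, (bhat q (p.1 ij) (p.2 ij) + F ij (p.1 ij)) with hΦdef
  set S : Set (((Fin N × Fin N) → ℝ) × ((Fin N × Fin N) → (Fin 4 → ℝ))) :=
    {p | A p.1 + B p.2 = 0 ∧ (1 / (N:ℝ))^2 * ∑ ij, p.1 ij = 1 ∧
      ∀ ij, p.1 ij ≤ d ij} with hSdef
  -- F is never ⊥
  have hFneb : ∀ ij (m : ℝ), F ij m ≠ ⊥ := by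
    intro ij m
    rcases lt_or_ge m 0 with h | h
    · rw [hFtop ij m h]; exact top_ne_bot
    · obtain ⟨r, hr⟩ := hFfin ij m h
      rw [hr]; exact EReal.coe_ne_bot r
  have htermne : ∀ (p : ((Fin N × Fin N) → ℝ) × ((Fin N × Fin N) → (Fin 4 → ℝ))) ij,
      bhat q (p.1 ij) (p.2 ij) + F ij (p.1 ij) ≠ ⊥ := by
    intro p ij
    rw [Ne, EReal.add_eq_bot_iff]
    push_neg
    exact ⟨bhat_ne_bot hq _ _, hFneb ij _⟩
  have hΦneb : ∀ p, Φ p ≠ ⊥ := fun p => ereal_sum_ne_bot _ _ fun ij _ => htermne p ij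
  -- construction of a feasible point with finite cost
  set σ : ℝ := (1/(N:ℝ))^2 * ∑ ij, d ij with hσdef
  have hσ1 : 1 < σ := hdsum
  have hσ0 : 0 < σ := lt_trans one_pos hσ1
  set c0 : ℝ := σ⁻¹ with hc0def
  have hc0 : 0 < c0 := inv_pos.mpr hσ0
  have hc1 : c0 ≤ 1 := (inv_lt_one_of_one_lt₀ hσ1).le
  set m0 : (Fin N × Fin N) → ℝ := fun ij => c0 * d ij with hm0def
  have hm0pos : ∀ ij, 0 < m0 ij := fun ij => mul_pos hc0 (hd ij)
  have hm0le : ∀ ij, m0 ij ≤ d ij := by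
    intro ij
    show c0 * d ij ≤ d ij
    have := hd ij
    nlinarith
  have hm0sum : (1/(N:ℝ))^2 * ∑ ij, m0 ij = 1 := by
    have hs : ∑ ij, m0 ij = c0 * ∑ ij, d ij := by
      rw [hm0def, Finset.mul_sum]
    rw [hs, show (1/(N:ℝ))^2 * (c0 * ∑ ij, d ij) = c0 * ((1/(N:ℝ))^2 * ∑ ij, d ij) from by ring,
      ← hσdef, hc0def]
    exact inv_mul_cancel₀ hσ0.ne'
  have hrange : -(A m0) ∈ LinearMap.range B := by
    have hmem : -(A m0) ∈ {y : (Fin N × Fin N) → ℝ | ∑ ij, y ij = 0} := by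
      simp only [Set.mem_setOf_eq, Pi.neg_apply, Finset.sum_neg_distrib, hAsum m0, neg_zero]
    rw [← SetLike.mem_coe, hB]
    exact hmem
  obtain ⟨w1, hw1⟩ := hrange
  set M : ℝ := ∑ ij, ∑ k, |w1 ij k| with hMdef
  have hMb : ∀ ij k, |w1 ij k| ≤ M := by
    intro ij k
    have h1 : |w1 ij k| ≤ ∑ k', |w1 ij k'| :=
      Finset.single_le_sum (f := fun k' => |w1 ij k'|) (fun k' _ => abs_nonneg _)
        (Finset.mem_univ k)
    refine h1.trans ?_
    rw [hMdef]
    exact Finset.single_le_sum (f := fun ij' => ∑ k', |w1 ij' k'|)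
      (fun ij' _ => Finset.sum_nonneg fun k' _ => abs_nonneg _) (Finset.mem_univ ij)
  set cv : Fin 4 → ℝ := fun k => if k = 0 ∨ k = 2 then M else -M with hcvdef
  have hcv0 : cv 0 = M := by rw [hcvdef]; exact if_pos (by decide)
  have hcv1 : cv 1 = -M := by rw [hcvdef]; exact if_neg (by decide)
  have hcv2 : cv 2 = M := by rw [hcvdef]; exact if_pos (by decide)
  have hcv3 : cv 3 = -M := by rw [hcvdef]; exact if_neg (by decide)
  set w0 : (Fin N × Fin N) → (Fin 4 → ℝ) := fun ij => w1 ij + cv with hw0def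
  have hw0app : ∀ ij k, w0 ij k = w1 ij k + cv k := by
    intro ij k; rw [hw0def]; rfl
  have hBw0 : B w0 = -(A m0) := by
    have heq : w0 = w1 + (fun _ => cv) := by
      funext ij; rw [hw0def]; rfl
    rw [heq, map_add, hBconst, add_zero, hw1]
  have hw0K : ∀ ij, w0 ij ∈ Kset := by
    intro ij
    have h0 := hMb ij 0; have h1 := hMb ij 1; have h2 := hMb ij 2; have h3 := hMb ij 3
    rw [abs_le] at h0 h1 h2 h3
    refine ⟨?_, ?_, ?_, ?_⟩
    · rw [hw0app ij 0, hcv0]; linarith [h0.1]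
    · rw [hw0app ij 1, hcv1]; linarith [h1.2]
    · rw [hw0app ij 2, hcv2]; linarith [h2.1]
    · rw [hw0app ij 3, hcv3]; linarith [h3.2]
  have hfeas0 : ((m0, w0) : ((Fin N × Fin N) → ℝ) × ((Fin N × Fin N) → (Fin 4 → ℝ))) ∈ S := by
    refine ⟨?_, hm0sum, hm0le⟩
    show A m0 + B w0 = 0
    rw [hBw0]; simp
  have hbhat0 : ∀ ij, bhat q (m0 ij) (w0 ij) ≠ ⊤ := by
    intro ij
    rw [bhat_eq_bfun (hw0K ij)]
    have heq : bfun q (m0 ij) (w0 ij)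
        = (((nrm4 (w0 ij) ^ q) / (q * (m0 ij) ^ (q-1)) : ℝ) : EReal) := by
      unfold bfun; rw [if_pos (hm0pos ij)]
    rw [heq]; exact EReal.coe_ne_top _
  have hF0 : ∀ ij, F ij (m0 ij) ≠ ⊤ := by
    intro ij; obtain ⟨r, hr⟩ := hFfin ij _ (hm0pos ij).le
    rw [hr]; exact EReal.coe_ne_top r
  have hΦ0top : Φ (m0, w0) ≠ ⊤ := by
    apply ereal_sum_ne_top
    intro ij _
    exact (EReal.add_lt_top (hbhat0 ij) (hF0 ij)).ne
  -- lower semicontinuity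
  have hFlsc : ∀ ij, LowerSemicontinuous (F ij) := fun ij => F_lsc (F ij) (hFcont ij) (hFtop ij)
  have hΦlsc : LowerSemicontinuous Φ := by
    apply lsc_sum_ereal Finset.univ
      (fun ij (p : ((Fin N × Fin N) → ℝ) × ((Fin N × Fin N) → (Fin 4 → ℝ))) =>
        bhat q (p.1 ij) (p.2 ij) + F ij (p.1 ij))
    · intro ij _
      have hcontmap : Continuous (fun p : ((Fin N × Fin N) → ℝ) × ((Fin N × Fin N) → (Fin 4 → ℝ)) =>
          ((p.1 ij, p.2 ij) : ℝ × (Fin 4 → ℝ))) :=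
        ((continuous_apply ij).comp continuous_fst).prodMk ((continuous_apply ij).comp continuous_snd)
      have hb := (bhat_lsc hq).comp hcontmap
      have hf : LowerSemicontinuous
          (fun p : ((Fin N × Fin N) → ℝ) × ((Fin N × Fin N) → (Fin 4 → ℝ)) => F ij (p.1 ij)) :=
        (hFlsc ij).comp ((continuous_apply ij).comp continuous_fst)
      exact hb.add' hf (fun p =>
        EReal.continuousAt_add (Or.inr (hFneb ij _)) (Or.inl (bhat_ne_bot hq _ _)))
    · intro ij _ p; exact htermne p ij
  -- closedness of the constraint set
  have hAc : Continuous A := A.continuous_of_finiteDimensional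
  have hBc : Continuous B := B.continuous_of_finiteDimensional
  have hSclosed : IsClosed S := by
    have h1 : IsClosed {p : ((Fin N × Fin N) → ℝ) × ((Fin N × Fin N) → (Fin 4 → ℝ)) |
        A p.1 + B p.2 = 0} :=
      isClosed_eq ((hAc.comp continuous_fst).add (hBc.comp continuous_snd)) continuous_const
    have h2 : IsClosed {p : ((Fin N × Fin N) → ℝ) × ((Fin N × Fin N) → (Fin 4 → ℝ)) |
        (1/(N:ℝ))^2 * ∑ ij, p.1 ij = 1} :=
      isClosed_eq (continuous_const.mul (continuous_finset_sum _ fun ij _ =>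
        (continuous_apply ij).comp continuous_fst)) continuous_const
    have h3 : IsClosed {p : ((Fin N × Fin N) → ℝ) × ((Fin N × Fin N) → (Fin 4 → ℝ)) |
        ∀ ij, p.1 ij ≤ d ij} := by
      have heq : {p : ((Fin N × Fin N) → ℝ) × ((Fin N × Fin N) → (Fin 4 → ℝ)) |
          ∀ ij, p.1 ij ≤ d ij}
          = ⋂ ij, {p : ((Fin N × Fin N) → ℝ) × ((Fin N × Fin N) → (Fin 4 → ℝ)) |
            p.1 ij ≤ d ij} := by
        ext p; simp
      rw [heq]
      exact isClosed_iInter fun ij =>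
        isClosed_le ((continuous_apply ij).comp continuous_fst) continuous_const
    have hSeq : S = {p : ((Fin N × Fin N) → ℝ) × ((Fin N × Fin N) → (Fin 4 → ℝ)) |
        A p.1 + B p.2 = 0} ∩ ({p | (1/(N:ℝ))^2 * ∑ ij, p.1 ij = 1} ∩
        {p | ∀ ij, p.1 ij ≤ d ij}) := by
      rw [hSdef]; rfl
    rw [hSeq]
    exact h1.inter (h2.inter h3)
  -- the sublevel set
  set C : EReal := Φ (m0, w0) with hCdef
  set K' : Set (((Fin N × Fin N) → ℝ) × ((Fin N × Fin N) → (Fin 4 → ℝ))) :=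
    S ∩ {p | Φ p ≤ C} with hK'def
  have hK'ne : K'.Nonempty := ⟨(m0, w0), hfeas0, le_refl C⟩
  have hK'closed : IsClosed K' := hSclosed.inter (hΦlsc.isClosed_preimage C)
  -- quantitative bounds on the sublevel set
  set Dsum : ℝ := ∑ ij, d ij with hDsumdef
  have hdDsum : ∀ ij, d ij ≤ Dsum := fun ij =>
    Finset.single_le_sum (fun ij' _ => (hd ij').le) (Finset.mem_univ ij)
  have hDsum0 : 0 ≤ Dsum := Finset.sum_nonneg fun ij _ => (hd ij).le
  set Ctr : ℝ := C.toReal with hCtrdef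
  have hCne : C = (Ctr : EReal) := (EReal.coe_toReal hΦ0top (hΦneb _)).symm
  -- lower bounds for F on the compact set
  have hLex : ∀ ij, ∃ Lb : ℝ, ∀ m ∈ Set.Icc (0:ℝ) (d ij), (Lb : EReal) ≤ F ij m := by
    intro ij
    obtain ⟨x, hx, hmin⟩ := exists_min_of_lsc (hFlsc ij) isCompact_Icc
      ⟨0, le_refl (0:ℝ), (hd ij).le⟩
    obtain ⟨r, hr⟩ := hFfin ij x hx.1
    exact ⟨r, fun m hm => by rw [← hr]; exact hmin m hm⟩
  choose L hL using hLex
  set Lsum : ℝ := ∑ ij, L ij with hLsumdef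
  set C2 : ℝ := Ctr - Lsum with hC2def
  set Rw : ℝ := (max C2 0 * (q * max Dsum 1 ^ (q - 1))) ^ q⁻¹ with hRwdef
  have hRw0 : 0 ≤ Rw := by
    rw [hRwdef]
    apply Real.rpow_nonneg
    exact mul_nonneg (le_max_right _ _) (mul_nonneg hq0.le
      (Real.rpow_nonneg (le_trans zero_le_one (le_max_right _ _)) _))
  set R : ℝ := max Dsum Rw with hRdef
  have hR0 : 0 ≤ R := le_trans hDsum0 (le_max_left _ _)
  have hmemb : ∀ p ∈ K', ∀ ij, 0 ≤ p.1 ij ∧ p.1 ij ≤ d ij ∧ nrm4 (p.2 ij) ≤ Rw := by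
    rintro p ⟨hpS, hpΦ⟩
    simp only [Set.mem_setOf_eq] at hpΦ
    obtain ⟨hp1, hp2, hp3⟩ := hpS
    have hterm_top : ∀ ij, bhat q (p.1 ij) (p.2 ij) + F ij (p.1 ij) ≠ ⊤ := by
      intro ij htop
      have hPhitop : Φ p = ⊤ := ereal_sum_eq_top Finset.univ
        (fun j => bhat q (p.1 j) (p.2 j) + F j (p.1 j)) (Finset.mem_univ ij) htop
        (fun j _ => htermne p j)
      rw [hPhitop, hCne] at hpΦ
      exact (EReal.coe_lt_top Ctr).not_ge hpΦ
    have hbtop : ∀ ij, bhat q (p.1 ij) (p.2 ij) ≠ ⊤ := by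
      intro ij hc
      exact hterm_top ij (by rw [hc]; exact EReal.top_add_of_ne_bot (hFneb ij _))
    have hFt : ∀ ij, F ij (p.1 ij) ≠ ⊤ := by
      intro ij hc
      exact hterm_top ij (by rw [hc]; exact EReal.add_top_of_ne_bot (bhat_ne_bot hq _ _))
    have hmge : ∀ ij, 0 ≤ p.1 ij := by
      intro ij; by_contra hc; push_neg at hc
      exact hFt ij (hFtop ij _ hc)
    have hwK : ∀ ij, p.2 ij ∈ Kset := by
      intro ij; by_contra hc
      apply hbtop ij
      unfold bhat; rw [if_neg hc]
      exact EReal.add_top_of_ne_bot (bfun_ne_bot hq _ _)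
    have hbfb : ∀ ij, bhat q (p.1 ij) (p.2 ij) = bfun q (p.1 ij) (p.2 ij) :=
      fun ij => bhat_eq_bfun (hwK ij)
    set tb : (Fin N × Fin N) → ℝ := fun ij => (bhat q (p.1 ij) (p.2 ij)).toReal with htbdef
    set tf : (Fin N × Fin N) → ℝ := fun ij => (F ij (p.1 ij)).toReal with htfdef
    have htb : ∀ ij, bhat q (p.1 ij) (p.2 ij) = ((tb ij : ℝ) : EReal) := fun ij =>
      (EReal.coe_toReal (hbtop ij) (bhat_ne_bot hq _ _)).symm
    have htf : ∀ ij, F ij (p.1 ij) = ((tf ij : ℝ) : EReal) := fun ij =>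
      (EReal.coe_toReal (hFt ij) (hFneb ij _)).symm
    have hΦeq : Φ p = ((∑ kl, (tb kl + tf kl) : ℝ) : EReal) := by
      rw [ereal_coe_sum]
      exact Finset.sum_congr rfl fun kl _ => by rw [htb kl, htf kl, EReal.coe_add]
    have hsumle : ∑ kl, (tb kl + tf kl) ≤ Ctr := by
      have h1 := hpΦ
      rw [hΦeq, hCne] at h1
      exact EReal.coe_le_coe_iff.mp h1
    have htb0 : ∀ ij, 0 ≤ tb ij := by
      intro ij
      have h1 : (0:EReal) ≤ ((tb ij : ℝ) : EReal) := by
        rw [← htb ij]; exact bhat_nonneg hq _ _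
      exact_mod_cast h1
    have htfL : ∀ ij, L ij ≤ tf ij := by
      intro ij
      have h1 := hL ij (p.1 ij) ⟨hmge ij, hp3 ij⟩
      rw [htf ij] at h1
      exact_mod_cast h1
    intro ij
    refine ⟨hmge ij, hp3 ij, ?_⟩
    have hkey : tb ij ≤ C2 := by
      have hsingle : tb ij + (tf ij - L ij) ≤ ∑ kl, (tb kl + (tf kl - L kl)) :=
        Finset.single_le_sum (f := fun kl => tb kl + (tf kl - L kl))
          (fun kl _ => by show (0:ℝ) ≤ tb kl + (tf kl - L kl); have := htb0 kl; have := htfL kl; linarith) (Finset.mem_univ ij)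
      have hsplit : ∑ kl, (tb kl + (tf kl - L kl)) = (∑ kl, (tb kl + tf kl)) - Lsum := by
        rw [hLsumdef, ← Finset.sum_sub_distrib]
        exact Finset.sum_congr rfl fun kl _ => by ring
      rw [hsplit] at hsingle
      rw [hC2def]
      have := htfL ij
      linarith
    have hble : bfun q (p.1 ij) (p.2 ij) ≤ ((C2 : ℝ) : EReal) := by
      rw [← hbfb ij, htb ij]
      exact_mod_cast hkey
    have hres := bfun_bound hq (hmge ij) ((hp3 ij).trans (hdDsum ij)) hble
    rw [hRwdef]
    exact hres
  have hK'sub : K' ⊆ Metric.closedBall 0 R := by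
    intro p hp
    have hb := hmemb p hp
    rw [Metric.mem_closedBall, dist_zero_right, Prod.norm_def]
    apply max_le
    · rw [pi_norm_le_iff_of_nonneg hR0]
      intro ij
      rw [Real.norm_eq_abs, abs_le]
      obtain ⟨h1, h2, h3⟩ := hb ij
      constructor
      · linarith
      · exact h2.trans ((hdDsum ij).trans (le_max_left _ _))
    · rw [pi_norm_le_iff_of_nonneg hR0]
      intro ij
      rw [pi_norm_le_iff_of_nonneg hR0]
      intro k
      rw [Real.norm_eq_abs]
      exact (abs_le_nrm4 _ k).trans ((hb ij).2.2.trans (le_max_right _ _))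
  have hK'cpt : IsCompact K' := Metric.isCompact_of_isClosed_isBounded hK'closed
    (Metric.isBounded_closedBall.subset hK'sub)
  obtain ⟨pmin, hpminK, hpminmin⟩ := exists_min_of_lsc hΦlsc hK'cpt hK'ne
  obtain ⟨hpminS, hpminle⟩ := hpminK
  simp only [Set.mem_setOf_eq] at hpminle
  refine ⟨pmin, hpminS, ?_, ?_, hΦneb pmin⟩
  · intro p' hp'
    rcases le_or_gt (Φ p') C with h | h
    · exact hpminmin p' ⟨hp', h⟩
    · exact le_trans hpminle h.le
  · exact ne_top_of_le_ne_top hΦ0top hpminle
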